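/- Let φ : S → R be an injective morphism of unital commutative k-algebras, 𝒟 = {D₂, D₁, S, ∂₂, ∂₁} a 2-crossed module over S and 𝒞 = {C₂, C₁, R, ∂₂', ∂₁'} a 2-crossed module over R. Let φ_*(𝒟) = {R ⊗_S D₂, R ⊗_S D₁, R, ∂₂*, ∂₁*} be the induced 2-crossed module along φ and φ^*(𝒞) = {C₂, φ*(C₁), S, ∂₂^*, ∂₁^*} the pullback 2-crossed module along φ. Then there are bijections between the following three sets: (1) morphisms of 2-crossed modules of the form (g₂, g₁, id_R) : φ_*(𝒟) → 𝒞; (2) pairs (f₂, f₁) such that (f₂, f₁, φ) : 𝒟 → 𝒞 is a morphism of 2-crossed modules; (3) morphisms of 2-crossed modules of the form (h₂, h₁, id_S) : 𝒟 → φ^*(𝒞). -/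

import Mathlib

/-! Basic notions: (not necessarily unital) commutative `k`-algebra structures given by a raw
multiplication on a `k`-module, morphisms of such, actions, (pre)crossed modules and
2-crossed modules of commutative `k`-algebras, and their morphisms. -/

section Defs

variable (k : Type*) [CommRing k]

/-- A raw multiplication `mul` turns the `k`-module `A` into a (not necessarily unital)
commutative `k`-algebra. -/
structure IsCommAlgebraStr {A : Type*} [AddCommGroup A] [Module k A]
    (mul : A → A → A) : Prop where
  comm : ∀ x y, mul x y = mul y x
  assoc : ∀ x y z, mul (mul x y) z = mul x (mul y z)
  add_left : ∀ x y z, mul (x + y) z = mul x z + mul y z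
  add_right : ∀ x y z, mul x (y + z) = mul x y + mul x z
  smul_left : ∀ (a : k) (x y : A), mul (a • x) y = a • mul x y
  smul_right : ∀ (a : k) (x y : A), mul x (a • y) = a • mul x y

/-- `f` is a morphism of (not necessarily unital) commutative `k`-algebras from
`(A, mulA)` to `(B, mulB)`. -/
structure IsAlgHomStr {A B : Type*} [AddCommGroup A] [Module k A] [AddCommGroup B] [Module k B]
    (mulA : A → A → A) (mulB : B → B → B) (f : A → B) : Prop where
  map_add : ∀ x y, f (x + y) = f x + f y
  map_smul : ∀ (a : k) (x : A), f (a • x) = a • f x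
  map_mul : ∀ x y, f (mulA x y) = mulB (f x) (f y)

/-- `act` is a `k`-bilinear action of the algebra `(R, mulR)` on the algebra `(A, mulA)`
making `A` an `R`-module and satisfying `r · (x x') = (r · x) x'`. -/
structure IsActionStr {R A : Type*} [AddCommGroup R] [Module k R] [AddCommGroup A] [Module k A]
    (mulR : R → R → R) (mulA : A → A → A) (act : R → A → A) : Prop where
  add_left : ∀ (r r' : R) (x : A), act (r + r') x = act r x + act r' x
  add_right : ∀ (r : R) (x y : A), act r (x + y) = act r x + act r y
  smul_left : ∀ (a : k) (r : R) (x : A), act (a • r) x = a • act r x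
  smul_right : ∀ (a : k) (r : R) (x : A), act r (a • x) = a • act r x
  mul_act : ∀ (r r' : R) (x : A), act (mulR r r') x = act r (act r' x)
  act_mul : ∀ (r : R) (x y : A), act r (mulA x y) = mulA (act r x) y

/-- `(C, R, d)` is a pre-crossed module of commutative `k`-algebras with action `act`. -/
structure IsPreCrossedModule {C R : Type*} [AddCommGroup C] [Module k C]
    [AddCommGroup R] [Module k R]
    (mulC : C → C → C) (mulR : R → R → R) (d : C → R) (act : R → C → C) : Prop where
  algC : IsCommAlgebraStr k mulC
  algR : IsCommAlgebraStr k mulR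
  hom : IsAlgHomStr k mulC mulR d
  action : IsActionStr k mulR mulC act
  equivariant : ∀ (r : R) (c : C), d (act r c) = mulR r (d c)

/-- `(C, R, d)` is a crossed module of commutative `k`-algebras with action `act`. -/
structure IsCrossedModule {C R : Type*} [AddCommGroup C] [Module k C]
    [AddCommGroup R] [Module k R]
    (mulC : C → C → C) (mulR : R → R → R) (d : C → R) (act : R → C → C)
    extends IsPreCrossedModule k mulC mulR d act : Prop where
  peiffer : ∀ c c' : C, act (d c) c' = mulC c c'

/-- `{L, M, P, d2, d1}` is a 2-crossed module of commutative `k`-algebras, with `P`-actions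
`actL`, `actM` on `L` and `M` and Peiffer lifting `pf`. -/
structure IsTwoCrossedModule {L M P : Type*} [AddCommGroup L] [Module k L]
    [AddCommGroup M] [Module k M] [AddCommGroup P] [Module k P]
    (mulL : L → L → L) (mulM : M → M → M) (mulP : P → P → P)
    (d2 : L → M) (d1 : M → P)
    (actL : P → L → L) (actM : P → M → M)
    (pf : M → M → L) : Prop where
  algL : IsCommAlgebraStr k mulL
  algM : IsCommAlgebraStr k mulM
  algP : IsCommAlgebraStr k mulP
  homD2 : IsAlgHomStr k mulL mulM d2
  homD1 : IsAlgHomStr k mulM mulP d1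
  d1_d2 : ∀ l : L, d1 (d2 l) = 0
  actionL : IsActionStr k mulP mulL actL
  actionM : IsActionStr k mulP mulM actM
  d2_equivariant : ∀ (p : P) (l : L), d2 (actL p l) = actM p (d2 l)
  d1_equivariant : ∀ (p : P) (m : M), d1 (actM p m) = mulP p (d1 m)
  pf_add_left : ∀ m m' m'' : M, pf (m + m') m'' = pf m m'' + pf m' m''
  pf_add_right : ∀ m m' m'' : M, pf m (m' + m'') = pf m m' + pf m m''
  pf_smul_left : ∀ (a : k) (m m' : M), pf (a • m) m' = a • pf m m'
  pf_smul_right : ∀ (a : k) (m m' : M), pf m (a • m') = a • pf m m'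
  pl1 : ∀ m₀ m₁ : M, d2 (pf m₀ m₁) = mulM m₀ m₁ - actM (d1 m₁) m₀
  pl2 : ∀ l₀ l₁ : L, pf (d2 l₀) (d2 l₁) = mulL l₀ l₁
  pl3 : ∀ m₀ m₁ m₂ : M, pf m₀ (mulM m₁ m₂) = pf (mulM m₀ m₁) m₂ + actL (d1 m₂) (pf m₀ m₁)
  pl4 : ∀ (m : M) (l : L), pf m (d2 l) + pf (d2 l) m = actL (d1 m) l
  pl5_left : ∀ (p : P) (m₀ m₁ : M), actL p (pf m₀ m₁) = pf (actM p m₀) m₁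
  pl5_right : ∀ (p : P) (m₀ m₁ : M), actL p (pf m₀ m₁) = pf m₀ (actM p m₁)

/-- `(f₂, f₁, f₀)` is a morphism of 2-crossed modules of commutative `k`-algebras. -/
structure IsTwoCrossedModuleHom {L M P L' M' P' : Type*}
    [AddCommGroup L] [Module k L] [AddCommGroup M] [Module k M] [AddCommGroup P] [Module k P]
    [AddCommGroup L'] [Module k L'] [AddCommGroup M'] [Module k M']
    [AddCommGroup P'] [Module k P']
    (mulL : L → L → L) (mulM : M → M → M) (mulP : P → P → P)
    (d2 : L → M) (d1 : M → P) (actL : P → L → L) (actM : P → M → M) (pf : M → M → L)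
    (mulL' : L' → L' → L') (mulM' : M' → M' → M') (mulP' : P' → P' → P')
    (d2' : L' → M') (d1' : M' → P') (actL' : P' → L' → L') (actM' : P' → M' → M')
    (pf' : M' → M' → L')
    (f₂ : L → L') (f₁ : M → M') (f₀ : P → P') : Prop where
  homF2 : IsAlgHomStr k mulL mulL' f₂
  homF1 : IsAlgHomStr k mulM mulM' f₁
  homF0 : IsAlgHomStr k mulP mulP' f₀
  comm_d2 : ∀ l : L, f₁ (d2 l) = d2' (f₂ l)
  comm_d1 : ∀ m : M, f₀ (d1 m) = d1' (f₁ m)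
  comm_actL : ∀ (p : P) (l : L), f₂ (actL p l) = actL' (f₀ p) (f₂ l)
  comm_actM : ∀ (p : P) (m : M), f₁ (actM p m) = actM' (f₀ p) (f₁ m)
  comm_pf : ∀ m m' : M, f₂ (pf m m') = pf' (f₁ m) (f₁ m')

end Defs


open TensorProduct in
/-- Lift a balanced bi-additive map out of `R ⊗[S] D`. -/
noncomputable def TwoXMod.liftAct {S R D C : Type*} [CommSemiring S] [AddCommGroup R]
    [Module S R] [AddCommGroup D] [Module S D] [AddCommGroup C]
    (F : R → D → C)
    (haddl : ∀ r r' d, F (r + r') d = F r d + F r' d)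
    (haddr : ∀ r d d', F r (d + d') = F r d + F r d')
    (hbal : ∀ (s : S) (r : R) (d : D), F (s • r) d = F r (s • d)) :
    R ⊗[S] D →+ C :=
  TensorProduct.liftAddHom
    (AddMonoidHom.mk' (fun r => AddMonoidHom.mk' (F r) (fun d d' => haddr r d d'))
      (fun r r' => AddMonoidHom.ext fun d => haddl r r' d))
    (fun s r d => hbal s r d)

open TensorProduct in
theorem TwoXMod.liftAct_tmul {S R D C : Type*} [CommSemiring S] [AddCommGroup R]
    [Module S R] [AddCommGroup D] [Module S D] [AddCommGroup C]
    (F : R → D → C) (haddl) (haddr) (hbal) (r : R) (d : D) :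
    TwoXMod.liftAct F haddl haddr hbal (r ⊗ₜ[S] d) = F r d := rfl

theorem TwoXMod.mapZero {k X Y : Type*} [CommRing k] [AddCommGroup X] [Module k X]
    [AddCommGroup Y] [Module k Y] (f : X → Y) (h : ∀ (a : k) x, f (a • x) = a • f x) :
    f 0 = 0 := by simpa using h 0 0

theorem TwoXMod.zeroLeft {k X Y Z : Type*} [CommRing k] [AddCommGroup X] [Module k X]
    [AddCommGroup Y] [AddCommGroup Z] [Module k Z]
    (m : X → Y → Z) (h : ∀ (a : k) x y, m (a • x) y = a • m x y) : ∀ y, m 0 y = 0 := by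
  intro y; simpa using h 0 0 y

theorem TwoXMod.zeroRight {k X Y Z : Type*} [CommRing k] [AddCommGroup X]
    [AddCommGroup Y] [Module k Y] [AddCommGroup Z] [Module k Z]
    (m : X → Y → Z) (h : ∀ (a : k) x y, m x (a • y) = a • m x y) : ∀ x, m x 0 = 0 := by
  intro x; simpa using h 0 x 0

/-- The pullback `{(x, y) | f x = g y}` of two `k`-linear maps, as a `k`-submodule of the
product. -/
def eqLocusSubmodule (k : Type*) [CommRing k] {X Y Z : Type*}
    [AddCommGroup X] [Module k X] [AddCommGroup Y] [Module k Y] [AddCommGroup Z] [Module k Z]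
    (f : X → Z) (g : Y → Z)
    (hfa : ∀ x y, f (x + y) = f x + f y) (hfs : ∀ (a : k) (x : X), f (a • x) = a • f x)
    (hga : ∀ x y, g (x + y) = g x + g y) (hgs : ∀ (a : k) (y : Y), g (a • y) = a • g y) :
    Submodule k (X × Y) where
  carrier := {p | f p.1 = g p.2}
  add_mem' := by
    intro a b (ha : f a.1 = g a.2) (hb : f b.1 = g b.2)
    show f (a.1 + b.1) = g (a.2 + b.2)
    rw [hfa, hga, ha, hb]
  zero_mem' := by
    have h0f : f 0 = 0 := by have := hfs 0 0; rwa [zero_smul, zero_smul] at this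
    have h0g : g 0 = 0 := by have := hgs 0 0; rwa [zero_smul, zero_smul] at this
    show f (0 : X) = g (0 : Y)
    rw [h0f, h0g]
  smul_mem' := by
    intro a p (hp : f p.1 = g p.2)
    show f (a • p.1) = g (a • p.2)
    rw [hfs, hgs, hp]

theorem TwoXMod.mem_eqLocus {k X Y Z : Type*} [CommRing k] [AddCommGroup X] [Module k X]
    [AddCommGroup Y] [Module k Y] [AddCommGroup Z] [Module k Z]
    {f : X → Z} {g : Y → Z} {hfa : ∀ x y, f (x + y) = f x + f y}
    {hfs : ∀ (a : k) (x : X), f (a • x) = a • f x}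
    {hga : ∀ x y, g (x + y) = g x + g y}
    {hgs : ∀ (a : k) (y : Y), g (a • y) = a • g y} {p : X × Y} (h : f p.1 = g p.2) :
    p ∈ eqLocusSubmodule k f g hfa hfs hga hgs := h

set_option maxHeartbeats 1000000 in
open TensorProduct in
/-- For an injective morphism `φ : S → R` of unital commutative
`k`-algebras, a 2-crossed module `𝒟 = {D₂, D₁, S}` and a 2-crossed module
`𝒞 = {C₂, C₁, R}`, there are bijections between: (1) morphisms `(g₂, g₁, id_R)` from the
induced 2-crossed module `φ_*(𝒟) = {R ⊗[S] D₂, R ⊗[S] D₁, R}` to `𝒞`; (2) pairs `(f₂, f₁)`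
such that `(f₂, f₁, φ) : 𝒟 → 𝒞` is a morphism of 2-crossed modules; (3) morphisms
`(h₂, h₁, id_S)` from `𝒟` to the pullback 2-crossed module `φ^*(𝒞) = {C₂, φ*(C₁), S}`. -/
theorem statement17 {k S R D₂ D₁ C₂ C₁ : Type*} [CommRing k] [CommRing S] [CommRing R]
    [Algebra k S] [Algebra k R] [Algebra S R] [IsScalarTower k S R]
    (φ : S → R) (hφ : ∀ s : S, φ s = algebraMap S R s) (hinj : Function.Injective φ)
    (hφadd : ∀ x y : S, φ (x + y) = φ x + φ y)
    (hφsmul : ∀ (a : k) (x : S), φ (a • x) = a • φ x)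
    [AddCommGroup D₂] [Module k D₂] [Module S D₂] [IsScalarTower k S D₂]
    [AddCommGroup D₁] [Module k D₁] [Module S D₁] [IsScalarTower k S D₁]
    [AddCommGroup C₂] [Module k C₂] [AddCommGroup C₁] [Module k C₁]
    (mulD2 : D₂ → D₂ → D₂) (mulD1 : D₁ → D₁ → D₁)
    (d2 : D₂ → D₁) (d1 : D₁ → S) (pf : D₁ → D₁ → D₂)
    (hD : IsTwoCrossedModule k mulD2 mulD1 (fun a b : S => a * b) d2 d1
      (fun (s : S) (x : D₂) => s • x) (fun (s : S) (x : D₁) => s • x) pf)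
    (mulC2 : C₂ → C₂ → C₂) (mulC1 : C₁ → C₁ → C₁)
    (d2C : C₂ → C₁) (d1C : C₁ → R) (actC2 : R → C₂ → C₂) (actC1 : R → C₁ → C₁)
    (pfC : C₁ → C₁ → C₂)
    (hC : IsTwoCrossedModule k mulC2 mulC1 (fun a b : R => a * b) d2C d1C actC2 actC1 pfC) :
    let A := ↥(eqLocusSubmodule k d1C φ hC.homD1.map_add hC.homD1.map_smul hφadd hφsmul)
    ∀ (mul2 : R ⊗[S] D₂ → R ⊗[S] D₂ → R ⊗[S] D₂)
      (mul1 : R ⊗[S] D₁ → R ⊗[S] D₁ → R ⊗[S] D₁)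
      (d2T : R ⊗[S] D₂ → R ⊗[S] D₁) (d1T : R ⊗[S] D₁ → R)
      (pfT : R ⊗[S] D₁ → R ⊗[S] D₁ → R ⊗[S] D₂),
      (∀ (r r' : R) (d d' : D₂),
        mul2 (r ⊗ₜ[S] d) (r' ⊗ₜ[S] d') = (r * r') ⊗ₜ[S] mulD2 d d') →
      (∀ (r r' : R) (d d' : D₁),
        mul1 (r ⊗ₜ[S] d) (r' ⊗ₜ[S] d') = (r * r') ⊗ₜ[S] mulD1 d d') →
      (∀ (r : R) (d : D₂), d2T (r ⊗ₜ[S] d) = r ⊗ₜ[S] d2 d) →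
      (∀ (r : R) (d : D₁), d1T (r ⊗ₜ[S] d) = r * φ (d1 d)) →
      (∀ (r r' : R) (d d' : D₁),
        pfT (r ⊗ₜ[S] d) (r' ⊗ₜ[S] d') = (r * r') ⊗ₜ[S] pf d d') →
      IsTwoCrossedModule k mul2 mul1 (fun a b : R => a * b) d2T d1T
        (fun (r : R) (x : R ⊗[S] D₂) => r • x) (fun (r : R) (x : R ⊗[S] D₁) => r • x)
        pfT →
      ∀ (mulA : A → A → A) (d2p : C₂ → A) (d1p : A → S) (actA : S → A → A)
        (actC2p : S → C₂ → C₂) (pfA : A → A → C₂),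
        (∀ x y : A, ((mulA x y : C₁ × S))
            = (mulC1 (x : C₁ × S).1 (y : C₁ × S).1, (x : C₁ × S).2 * (y : C₁ × S).2)) →
        (∀ c₂ : C₂, ((d2p c₂ : C₁ × S)) = (d2C c₂, 0)) →
        (∀ x : A, d1p x = (x : C₁ × S).2) →
        (∀ (s : S) (x : A), ((actA s x : C₁ × S))
            = (actC1 (φ s) (x : C₁ × S).1, s * (x : C₁ × S).2)) →
        (∀ (s : S) (c₂ : C₂), actC2p s c₂ = actC2 (φ s) c₂) →
        (∀ x y : A, pfA x y = pfC (x : C₁ × S).1 (y : C₁ × S).1) →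
        IsTwoCrossedModule k mulC2 mulA (fun a b : S => a * b) d2p d1p actC2p actA pfA →
        Nonempty
          ({g : (R ⊗[S] D₂ → C₂) × (R ⊗[S] D₁ → C₁) //
              IsTwoCrossedModuleHom k mul2 mul1 (fun a b : R => a * b) d2T d1T
                (fun (r : R) (x : R ⊗[S] D₂) => r • x)
                (fun (r : R) (x : R ⊗[S] D₁) => r • x) pfT
                mulC2 mulC1 (fun a b : R => a * b) d2C d1C actC2 actC1 pfC
                g.1 g.2 id}
            ≃ {f : (D₂ → C₂) × (D₁ → C₁) //
                IsTwoCrossedModuleHom k mulD2 mulD1 (fun a b : S => a * b) d2 d1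
                  (fun (s : S) (x : D₂) => s • x) (fun (s : S) (x : D₁) => s • x) pf
                  mulC2 mulC1 (fun a b : R => a * b) d2C d1C actC2 actC1 pfC
                  f.1 f.2 φ})
        ∧ Nonempty
          ({f : (D₂ → C₂) × (D₁ → C₁) //
              IsTwoCrossedModuleHom k mulD2 mulD1 (fun a b : S => a * b) d2 d1
                (fun (s : S) (x : D₂) => s • x) (fun (s : S) (x : D₁) => s • x) pf
                mulC2 mulC1 (fun a b : R => a * b) d2C d1C actC2 actC1 pfC
                f.1 f.2 φ}
            ≃ {p : (D₂ → C₂) × (D₁ → A) //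
                IsTwoCrossedModuleHom k mulD2 mulD1 (fun a b : S => a * b) d2 d1
                  (fun (s : S) (x : D₂) => s • x) (fun (s : S) (x : D₁) => s • x) pf
                  mulC2 mulA (fun a b : S => a * b) d2p d1p actC2p actA pfA
                  p.1 p.2 id}) := by
  intro A mul2 mul1 d2T d1T pfT hmul2 hmul1 hd2T hd1T hpfT hT
  intro mulA d2p d1p actA actC2p pfA hmulA hd2p hd1p hactA hactC2p hpfA hA
  -- basic facts about φ and tensor products
  have hφ1 : φ (1 : S) = 1 := by rw [hφ]; exact map_one _
  have hφmul : ∀ x y : S, φ (x * y) = φ x * φ y := by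
    intro x y; rw [hφ, hφ, hφ]; exact map_mul _ x y
  have hsmulR : ∀ (s : S) (r : R), s • r = φ s * r := by
    intro s r; rw [hφ]; exact Algebra.smul_def s r
  have hsm2 : ∀ (r r' : R) (d : D₂), r • (r' ⊗ₜ[S] d) = (r * r') ⊗ₜ[S] d := by
    intro r r' d; rw [TensorProduct.smul_tmul', smul_eq_mul]
  have hsm1 : ∀ (r r' : R) (d : D₁), r • (r' ⊗ₜ[S] d) = (r * r') ⊗ₜ[S] d := by
    intro r r' d; rw [TensorProduct.smul_tmul', smul_eq_mul]
  have hksm2 : ∀ (a : k) (r : R) (d : D₂), a • (r ⊗ₜ[S] d) = (a • r) ⊗ₜ[S] d := by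
    intro a r d; rw [TensorProduct.smul_tmul']
  have hksm1 : ∀ (a : k) (r : R) (d : D₁), a • (r ⊗ₜ[S] d) = (a • r) ⊗ₜ[S] d := by
    intro a r d; rw [TensorProduct.smul_tmul']
  have hone2 : ∀ (s : S) (d : D₂), (1:R) ⊗ₜ[S] (s • d) = (φ s) ⊗ₜ[S] d := by
    intro s d; rw [← TensorProduct.smul_tmul, hsmulR, mul_one]
  have hone1 : ∀ (s : S) (d : D₁), (1:R) ⊗ₜ[S] (s • d) = (φ s) ⊗ₜ[S] d := by
    intro s d; rw [← TensorProduct.smul_tmul, hsmulR, mul_one]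
  -- zero lemmas
  have hd2C0 : d2C 0 = 0 := TwoXMod.mapZero d2C hC.homD2.map_smul
  have hd1C0 : d1C 0 = 0 := TwoXMod.mapZero d1C hC.homD1.map_smul
  have hd2T0 : d2T 0 = 0 := TwoXMod.mapZero d2T hT.homD2.map_smul
  have hd1T0 : d1T 0 = 0 := TwoXMod.mapZero d1T hT.homD1.map_smul
  have hmulC2z := TwoXMod.zeroLeft mulC2 hC.algL.smul_left
  have hmulC2z' := TwoXMod.zeroRight mulC2 hC.algL.smul_right
  have hmulC1z := TwoXMod.zeroLeft mulC1 hC.algM.smul_left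
  have hmulC1z' := TwoXMod.zeroRight mulC1 hC.algM.smul_right
  have hmul2z := TwoXMod.zeroLeft mul2 hT.algL.smul_left
  have hmul2z' := TwoXMod.zeroRight mul2 hT.algL.smul_right
  have hmul1z := TwoXMod.zeroLeft mul1 hT.algM.smul_left
  have hmul1z' := TwoXMod.zeroRight mul1 hT.algM.smul_right
  have hactC2z' := TwoXMod.zeroRight actC2 hC.actionL.smul_right
  have hactC1z' := TwoXMod.zeroRight actC1 hC.actionM.smul_right
  have hpfCz := TwoXMod.zeroLeft pfC hC.pf_smul_left
  have hpfCz' := TwoXMod.zeroRight pfC hC.pf_smul_right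
  have hpfTz := TwoXMod.zeroLeft pfT hT.pf_smul_left
  have hpfTz' := TwoXMod.zeroRight pfT hT.pf_smul_right
  -- compatibility of actions with multiplications / Peiffer lifting in 𝒞
  have actMul2 : ∀ (r r' : R) (a b : C₂),
      mulC2 (actC2 r a) (actC2 r' b) = actC2 (r * r') (mulC2 a b) := by
    intro r r' a b
    calc mulC2 (actC2 r a) (actC2 r' b)
        = actC2 r (mulC2 a (actC2 r' b)) := (hC.actionL.act_mul r a (actC2 r' b)).symm
      _ = actC2 r (mulC2 (actC2 r' b) a) := by rw [hC.algL.comm a (actC2 r' b)]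
      _ = actC2 r (actC2 r' (mulC2 b a)) := by rw [← hC.actionL.act_mul r' b a]
      _ = actC2 r (actC2 r' (mulC2 a b)) := by rw [hC.algL.comm b a]
      _ = actC2 (r * r') (mulC2 a b) := (hC.actionL.mul_act r r' _).symm
  have actMul1 : ∀ (r r' : R) (a b : C₁),
      mulC1 (actC1 r a) (actC1 r' b) = actC1 (r * r') (mulC1 a b) := by
    intro r r' a b
    calc mulC1 (actC1 r a) (actC1 r' b)
        = actC1 r (mulC1 a (actC1 r' b)) := (hC.actionM.act_mul r a (actC1 r' b)).symm
      _ = actC1 r (mulC1 (actC1 r' b) a) := by rw [hC.algM.comm a (actC1 r' b)]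
      _ = actC1 r (actC1 r' (mulC1 b a)) := by rw [← hC.actionM.act_mul r' b a]
      _ = actC1 r (actC1 r' (mulC1 a b)) := by rw [hC.algM.comm b a]
      _ = actC1 (r * r') (mulC1 a b) := (hC.actionM.mul_act r r' _).symm
  have actPf : ∀ (r r' : R) (a b : C₁),
      pfC (actC1 r a) (actC1 r' b) = actC2 (r * r') (pfC a b) := by
    intro r r' a b
    calc pfC (actC1 r a) (actC1 r' b)
        = actC2 r (pfC a (actC1 r' b)) := (hC.pl5_left r a (actC1 r' b)).symm
      _ = actC2 r (actC2 r' (pfC a b)) := by rw [← hC.pl5_right r' a b]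
      _ = actC2 (r * r') (pfC a b) := (hC.actionL.mul_act r r' _).symm
  constructor
  -- ===================== first bijection =====================
  · refine ⟨⟨fun g => ⟨(fun d => g.1.1 ((1:R) ⊗ₜ[S] d), fun d => g.1.2 ((1:R) ⊗ₜ[S] d)), ?_⟩,
      fun f => ⟨(fun x => TwoXMod.liftAct (fun r d => actC2 r (f.1.1 d))
          (fun r r' d => hC.actionL.add_left r r' (f.1.1 d))
          (fun r d d' => by
            show actC2 r (f.1.1 (d + d')) = actC2 r (f.1.1 d) + actC2 r (f.1.1 d')
            rw [f.2.homF2.map_add]; exact hC.actionL.add_right r _ _)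
          (fun s r d => by
            show actC2 (s • r) (f.1.1 d) = actC2 r (f.1.1 (s • d))
            simp only [f.2.comm_actL]
            rw [hsmulR, mul_comm]
            exact hC.actionL.mul_act r (φ s) (f.1.1 d)) x,
        fun x => TwoXMod.liftAct (fun r d => actC1 r (f.1.2 d))
          (fun r r' d => hC.actionM.add_left r r' (f.1.2 d))
          (fun r d d' => by
            show actC1 r (f.1.2 (d + d')) = actC1 r (f.1.2 d) + actC1 r (f.1.2 d')
            rw [f.2.homF1.map_add]; exact hC.actionM.add_right r _ _)
          (fun s r d => by
            show actC1 (s • r) (f.1.2 d) = actC1 r (f.1.2 (s • d))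
            simp only [f.2.comm_actM]
            rw [hsmulR, mul_comm]
            exact hC.actionM.mul_act r (φ s) (f.1.2 d)) x), ?_⟩,
      ?_, ?_⟩⟩
    -- toFun sends morphisms to morphisms
    · obtain ⟨⟨g₂, g₁⟩, hg⟩ := g
      refine
        { homF2 := { map_add := ?_, map_smul := ?_, map_mul := ?_ }
          homF1 := { map_add := ?_, map_smul := ?_, map_mul := ?_ }
          homF0 := ⟨hφadd, hφsmul, hφmul⟩
          comm_d2 := ?_, comm_d1 := ?_, comm_actL := ?_, comm_actM := ?_, comm_pf := ?_ }
      · intro x y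
        show g₂ ((1:R) ⊗ₜ[S] (x + y)) = g₂ ((1:R) ⊗ₜ[S] x) + g₂ ((1:R) ⊗ₜ[S] y)
        rw [TensorProduct.tmul_add]; exact hg.homF2.map_add _ _
      · intro a x
        show g₂ ((1:R) ⊗ₜ[S] (a • x)) = a • g₂ ((1:R) ⊗ₜ[S] x)
        rw [TensorProduct.tmul_smul]; exact hg.homF2.map_smul a _
      · intro x y
        show g₂ ((1:R) ⊗ₜ[S] mulD2 x y) = mulC2 (g₂ ((1:R) ⊗ₜ[S] x)) (g₂ ((1:R) ⊗ₜ[S] y))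
        have h := hg.homF2.map_mul ((1:R) ⊗ₜ[S] x) ((1:R) ⊗ₜ[S] y)
        rw [hmul2, one_mul] at h
        exact h
      · intro x y
        show g₁ ((1:R) ⊗ₜ[S] (x + y)) = g₁ ((1:R) ⊗ₜ[S] x) + g₁ ((1:R) ⊗ₜ[S] y)
        rw [TensorProduct.tmul_add]; exact hg.homF1.map_add _ _
      · intro a x
        show g₁ ((1:R) ⊗ₜ[S] (a • x)) = a • g₁ ((1:R) ⊗ₜ[S] x)
        rw [TensorProduct.tmul_smul]; exact hg.homF1.map_smul a _
      · intro x y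
        show g₁ ((1:R) ⊗ₜ[S] mulD1 x y) = mulC1 (g₁ ((1:R) ⊗ₜ[S] x)) (g₁ ((1:R) ⊗ₜ[S] y))
        have h := hg.homF1.map_mul ((1:R) ⊗ₜ[S] x) ((1:R) ⊗ₜ[S] y)
        rw [hmul1, one_mul] at h
        exact h
      · intro l
        show g₁ ((1:R) ⊗ₜ[S] d2 l) = d2C (g₂ ((1:R) ⊗ₜ[S] l))
        have h := hg.comm_d2 ((1:R) ⊗ₜ[S] l)
        rw [hd2T] at h
        exact h
      · intro m
        show φ (d1 m) = d1C (g₁ ((1:R) ⊗ₜ[S] m))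
        have h := hg.comm_d1 ((1:R) ⊗ₜ[S] m)
        rw [hd1T] at h
        simpa using h
      · intro s l
        show g₂ ((1:R) ⊗ₜ[S] (s • l)) = actC2 (φ s) (g₂ ((1:R) ⊗ₜ[S] l))
        rw [hone2]
        have h := hg.comm_actL (φ s) ((1:R) ⊗ₜ[S] l)
        simp only [hsm2, mul_one, id_eq] at h
        exact h
      · intro s m
        show g₁ ((1:R) ⊗ₜ[S] (s • m)) = actC1 (φ s) (g₁ ((1:R) ⊗ₜ[S] m))
        rw [hone1]
        have h := hg.comm_actM (φ s) ((1:R) ⊗ₜ[S] m)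
        simp only [hsm1, mul_one, id_eq] at h
        exact h
      · intro m m'
        show g₂ ((1:R) ⊗ₜ[S] pf m m') = pfC (g₁ ((1:R) ⊗ₜ[S] m)) (g₁ ((1:R) ⊗ₜ[S] m'))
        have h := hg.comm_pf ((1:R) ⊗ₜ[S] m) ((1:R) ⊗ₜ[S] m')
        rw [hpfT, one_mul] at h
        exact h
    -- invFun sends morphisms to morphisms
    · obtain ⟨⟨u, v⟩, hf⟩ := f
      have hu_mul : ∀ x y, u (mulD2 x y) = mulC2 (u x) (u y) := hf.homF2.map_mul
      have hv_mul : ∀ x y, v (mulD1 x y) = mulC1 (v x) (v y) := hf.homF1.map_mul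
      have huv_d2 : ∀ l, v (d2 l) = d2C (u l) := hf.comm_d2
      have huv_d1 : ∀ m, φ (d1 m) = d1C (v m) := hf.comm_d1
      have huv_pf : ∀ m m', u (pf m m') = pfC (v m) (v m') := hf.comm_pf
      refine
        { homF2 := { map_add := ?_, map_smul := ?_, map_mul := ?_ }
          homF1 := { map_add := ?_, map_smul := ?_, map_mul := ?_ }
          homF0 := ⟨fun _ _ => rfl, fun _ _ => rfl, fun _ _ => rfl⟩
          comm_d2 := ?_, comm_d1 := ?_, comm_actL := ?_, comm_actM := ?_, comm_pf := ?_ }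
      · intro x y; dsimp only; exact map_add _ x y
      · intro a x; dsimp only
        induction x using TensorProduct.induction_on with
        | zero => rw [smul_zero, map_zero, smul_zero]
        | tmul r d =>
          rw [hksm2]
          simp only [TwoXMod.liftAct_tmul]
          exact hC.actionL.smul_left a r (u d)
        | add x y ihx ihy => rw [smul_add, map_add, map_add, ihx, ihy, smul_add]
      · intro x y; dsimp only
        induction x using TensorProduct.induction_on with
        | zero => rw [hmul2z, map_zero, hmulC2z]
        | tmul r d =>
          induction y using TensorProduct.induction_on with
          | zero => rw [hmul2z', map_zero, hmulC2z']
          | tmul r' d' =>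
            rw [hmul2]
            simp only [TwoXMod.liftAct_tmul]
            rw [hu_mul, actMul2]
          | add y₁ y₂ ih1 ih2 =>
            rw [hT.algL.add_right, map_add, ih1, ih2, map_add, hC.algL.add_right]
        | add x₁ x₂ ih1 ih2 =>
          rw [hT.algL.add_left, map_add, ih1, ih2, map_add, hC.algL.add_left]
      · intro x y; dsimp only; exact map_add _ x y
      · intro a x; dsimp only
        induction x using TensorProduct.induction_on with
        | zero => rw [smul_zero, map_zero, smul_zero]
        | tmul r d =>
          rw [hksm1]
          simp only [TwoXMod.liftAct_tmul]
          exact hC.actionM.smul_left a r (v d)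
        | add x y ihx ihy => rw [smul_add, map_add, map_add, ihx, ihy, smul_add]
      · intro x y; dsimp only
        induction x using TensorProduct.induction_on with
        | zero => rw [hmul1z, map_zero, hmulC1z]
        | tmul r d =>
          induction y using TensorProduct.induction_on with
          | zero => rw [hmul1z', map_zero, hmulC1z']
          | tmul r' d' =>
            rw [hmul1]
            simp only [TwoXMod.liftAct_tmul]
            rw [hv_mul, actMul1]
          | add y₁ y₂ ih1 ih2 =>
            rw [hT.algM.add_right, map_add, ih1, ih2, map_add, hC.algM.add_right]
        | add x₁ x₂ ih1 ih2 =>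
          rw [hT.algM.add_left, map_add, ih1, ih2, map_add, hC.algM.add_left]
      · intro x; dsimp only
        induction x using TensorProduct.induction_on with
        | zero => rw [hd2T0, map_zero, map_zero, hd2C0]
        | tmul r d =>
          rw [hd2T]
          simp only [TwoXMod.liftAct_tmul]
          rw [huv_d2, hC.d2_equivariant]
        | add x y ihx ihy =>
          rw [hT.homD2.map_add, map_add, map_add, ihx, ihy, hC.homD2.map_add]
      · intro x; simp only [id_eq]
        induction x using TensorProduct.induction_on with
        | zero => rw [hd1T0, map_zero, hd1C0]
        | tmul r d =>
          rw [hd1T]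
          simp only [TwoXMod.liftAct_tmul]
          rw [hC.d1_equivariant, huv_d1]
        | add x y ihx ihy =>
          rw [hT.homD1.map_add, map_add, ihx, ihy, hC.homD1.map_add]
      · intro r x; simp only [id_eq]
        induction x using TensorProduct.induction_on with
        | zero => rw [smul_zero, map_zero, hactC2z']
        | tmul r' d =>
          rw [hsm2]
          simp only [TwoXMod.liftAct_tmul]
          exact hC.actionL.mul_act r r' (u d)
        | add x y ihx ihy =>
          rw [smul_add, map_add, map_add, ihx, ihy, hC.actionL.add_right]
      · intro r x; simp only [id_eq]
        induction x using TensorProduct.induction_on with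
        | zero => rw [smul_zero, map_zero, hactC1z']
        | tmul r' d =>
          rw [hsm1]
          simp only [TwoXMod.liftAct_tmul]
          exact hC.actionM.mul_act r r' (v d)
        | add x y ihx ihy =>
          rw [smul_add, map_add, map_add, ihx, ihy, hC.actionM.add_right]
      · intro x y; dsimp only
        induction x using TensorProduct.induction_on with
        | zero => rw [hpfTz, map_zero, map_zero, hpfCz]
        | tmul r d =>
          induction y using TensorProduct.induction_on with
          | zero => rw [hpfTz', map_zero, map_zero, hpfCz']
          | tmul r' d' =>
            rw [hpfT]
            simp only [TwoXMod.liftAct_tmul]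
            rw [huv_pf, actPf]
          | add y₁ y₂ ih1 ih2 =>
            rw [hT.pf_add_right, map_add, ih1, ih2, map_add, hC.pf_add_right]
        | add x₁ x₂ ih1 ih2 =>
          rw [hT.pf_add_left, map_add, ih1, ih2, map_add, hC.pf_add_left]
    -- left inverse
    · intro g
      obtain ⟨⟨g₂, g₁⟩, hg⟩ := g
      have hg₂0 : g₂ 0 = 0 := TwoXMod.mapZero g₂ hg.homF2.map_smul
      have hg₁0 : g₁ 0 = 0 := TwoXMod.mapZero g₁ hg.homF1.map_smul
      have hg₂add : ∀ x y, g₂ (x + y) = g₂ x + g₂ y := hg.homF2.map_add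
      have hg₁add : ∀ x y, g₁ (x + y) = g₁ x + g₁ y := hg.homF1.map_add
      apply Subtype.ext
      dsimp only
      refine Prod.ext ?_ ?_
      · funext x
        dsimp only
        induction x using TensorProduct.induction_on with
        | zero => rw [map_zero, hg₂0]
        | tmul r d =>
          simp only [TwoXMod.liftAct_tmul]
          have h := hg.comm_actL r ((1:R) ⊗ₜ[S] d)
          simp only [hsm2, mul_one, id_eq] at h
          exact h.symm
        | add x y ihx ihy => rw [map_add, hg₂add, ihx, ihy]
      · funext x
        dsimp only
        induction x using TensorProduct.induction_on with
        | zero => rw [map_zero, hg₁0]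
        | tmul r d =>
          simp only [TwoXMod.liftAct_tmul]
          have h := hg.comm_actM r ((1:R) ⊗ₜ[S] d)
          simp only [hsm1, mul_one, id_eq] at h
          exact h.symm
        | add x y ihx ihy => rw [map_add, hg₁add, ihx, ihy]
    -- right inverse
    · intro f
      obtain ⟨⟨u, v⟩, hf⟩ := f
      apply Subtype.ext
      dsimp only
      refine Prod.ext ?_ ?_
      · funext d
        simp only [TwoXMod.liftAct_tmul]
        have h := hf.comm_actL 1 d
        simp only [one_smul, hφ1] at h
        exact h.symm
      · funext d
        simp only [TwoXMod.liftAct_tmul]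
        have h := hf.comm_actM 1 d
        simp only [one_smul, hφ1] at h
        exact h.symm
  -- ===================== second bijection =====================
  · refine ⟨⟨fun f => ⟨(f.1.1, fun d => ⟨(f.1.2 d, d1 d),
        TwoXMod.mem_eqLocus (f.2.comm_d1 d).symm⟩), ?_⟩,
      fun h => ⟨(h.1.1, fun d => ((h.1.2 d : C₁ × S)).1), ?_⟩, ?_, ?_⟩⟩
    -- toFun sends morphisms to morphisms
    · obtain ⟨⟨u, v⟩, hf⟩ := f
      refine
        { homF2 := hf.homF2
          homF1 := { map_add := ?_, map_smul := ?_, map_mul := ?_ }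
          homF0 := ⟨fun _ _ => rfl, fun _ _ => rfl, fun _ _ => rfl⟩
          comm_d2 := ?_, comm_d1 := ?_, comm_actL := ?_, comm_actM := ?_, comm_pf := ?_ }
      · intro x y
        apply Subtype.ext
        simp only [Submodule.coe_add, Prod.mk_add_mk]
        exact Prod.ext (hf.homF1.map_add x y) (hD.homD1.map_add x y)
      · intro a x
        apply Subtype.ext
        simp only [SetLike.val_smul, Prod.smul_mk]
        exact Prod.ext (hf.homF1.map_smul a x) (hD.homD1.map_smul a x)
      · intro x y
        apply Subtype.ext
        rw [hmulA]
        dsimp only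
        exact Prod.ext (hf.homF1.map_mul x y) (hD.homD1.map_mul x y)
      · intro l
        apply Subtype.ext
        rw [hd2p]
        dsimp only
        exact Prod.ext (hf.comm_d2 l) (hD.d1_d2 l)
      · intro m
        rw [hd1p]
        rfl
      · intro s l
        rw [hactC2p]
        exact hf.comm_actL s l
      · intro s m
        apply Subtype.ext
        rw [hactA]
        dsimp only
        exact Prod.ext (hf.comm_actM s m) (hD.d1_equivariant s m)
      · intro m m'
        rw [hpfA]
        dsimp only
        exact hf.comm_pf m m'
    -- invFun sends morphisms to morphisms
    · obtain ⟨⟨w, h1⟩, hh⟩ := h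
      have k_d1 : ∀ m, d1 m = d1p (h1 m) := hh.comm_d1
      have hsnd : ∀ d, ((h1 d : C₁ × S)).2 = d1 d := by
        intro d
        rw [k_d1 d, hd1p]
      have hmem : ∀ d, d1C ((h1 d : C₁ × S)).1 = φ ((h1 d : C₁ × S)).2 :=
        fun d => (h1 d).2
      have k_add : ∀ x y, h1 (x + y) = h1 x + h1 y := hh.homF1.map_add
      have k_smul : ∀ (a : k) (x : D₁), h1 (a • x) = a • h1 x := hh.homF1.map_smul
      have k_mul : ∀ x y, h1 (mulD1 x y) = mulA (h1 x) (h1 y) := hh.homF1.map_mul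
      have k_d2 : ∀ l, h1 (d2 l) = d2p (w l) := hh.comm_d2
      have k_actL : ∀ (s : S) (l : D₂), w (s • l) = actC2p s (w l) := hh.comm_actL
      have k_actM : ∀ (s : S) (m : D₁), h1 (s • m) = actA s (h1 m) := hh.comm_actM
      have k_pf : ∀ m m', w (pf m m') = pfA (h1 m) (h1 m') := hh.comm_pf
      refine
        { homF2 := hh.homF2
          homF1 := { map_add := ?_, map_smul := ?_, map_mul := ?_ }
          homF0 := ⟨hφadd, hφsmul, hφmul⟩
          comm_d2 := ?_, comm_d1 := ?_, comm_actL := ?_, comm_actM := ?_, comm_pf := ?_ }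
      · intro x y
        simp only [k_add]
        rfl
      · intro a x
        simp only [k_smul]
        rfl
      · intro x y
        simp only [k_mul, hmulA]
      · intro l
        simp only [k_d2, hd2p]
      · intro m
        rw [← hsnd m]
        exact (hmem m).symm
      · intro s l
        simp only [k_actL, hactC2p]
      · intro s m
        simp only [k_actM, hactA]
      · intro m m'
        simp only [k_pf, hpfA]
    -- left inverse
    · intro f
      exact Subtype.ext rfl
    -- right inverse
    · intro h
      obtain ⟨⟨w, h1⟩, hh⟩ := h
      apply Subtype.ext
      dsimp only
      refine Prod.ext rfl ?_
      funext d
      apply Subtype.ext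
      refine Prod.ext rfl ?_
      have h := hh.comm_d1 d
      rw [hd1p] at h
      exact h
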